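/- If w ∈ ℝ^n has all coordinates strictly positive, then pos(A) = ⋃_{τ ∈ T_w} pos(τ); that is, every element of the cone pos(A) is a nonnegative real combination of the columns a_j with j ∈ τ, for some subset τ ∈ T_w. -/

import Mathlib

open Matrix

section ConeAux

open Finset

variable {ι : Type*} [Fintype ι] {E : Type*} [NormedAddCommGroup E] [NormedSpace ℝ E]

def coneOf (v : ι → E) : Set E := {x | ∃ t : ι → ℝ, (∀ j, 0 ≤ t j) ∧ x = ∑ j, t j • v j}

lemma coneOf_convex (v : ι → E) : Convex ℝ (coneOf v) := by
  rintro x ⟨t, ht, rfl⟩ y ⟨s, hs, rfl⟩ a b ha hb hab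
  refine ⟨fun j => a * t j + b * s j,
    fun j => add_nonneg (mul_nonneg ha (ht j)) (mul_nonneg hb (hs j)), ?_⟩
  rw [Finset.smul_sum, Finset.smul_sum, ← Finset.sum_add_distrib]
  exact Finset.sum_congr rfl fun j _ => by rw [add_smul, smul_smul, smul_smul]

lemma exists_indep_rep (v : ι → E) :
    ∀ (N : ℕ) (t : ι → ℝ), (Finset.univ.filter fun j => t j ≠ 0).card ≤ N →
      (∀ j, 0 ≤ t j) →
      ∃ s : ι → ℝ, (∀ j, 0 ≤ s j) ∧ (∑ j, s j • v j) = (∑ j, t j • v j) ∧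
        LinearIndependent ℝ (fun j : {j // s j ≠ 0} => v j) := by
  classical
  intro N
  induction N with
  | zero =>
    intro t hcard ht
    have hzero : ∀ j, t j = 0 := by
      intro j
      by_contra h
      have hmem : j ∈ Finset.univ.filter fun j => t j ≠ 0 := by simp [h]
      have := Finset.card_pos.mpr ⟨j, hmem⟩
      omega
    refine ⟨t, ht, rfl, ?_⟩
    have : IsEmpty {j // t j ≠ 0} := ⟨fun ⟨j, hj⟩ => hj (hzero j)⟩
    exact linearIndependent_empty_type
  | succ N ih =>
    intro t hcard ht
    by_cases hli : LinearIndependent ℝ (fun j : {j // t j ≠ 0} => v j)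
    · exact ⟨t, ht, rfl, hli⟩
    · obtain ⟨g, hg0, i0, hi0⟩ := Fintype.not_linearIndependent_iff.mp hli
      set r0 : ι → ℝ := fun j => if h : t j ≠ 0 then g ⟨j, h⟩ else 0 with hr0
      have hr0sum : ∑ j, r0 j • v j = 0 := by
        have e1 : ∑ j, r0 j • v j
            = ∑ j ∈ Finset.univ.filter (fun j => t j ≠ 0), r0 j • v j := by
          refine (Finset.sum_filter_of_ne ?_).symm
          exact fun x _ hx h => hx (by simp [hr0, h])
        have e2 : ∑ j ∈ Finset.univ.filter (fun j => t j ≠ 0), r0 j • v j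
            = ∑ j : {x // x ∈ Finset.univ.filter (fun j => t j ≠ 0)}, r0 (j : ι) • v (j : ι) :=
          (Finset.sum_coe_sort _ _).symm
        rw [e1, e2, ← hg0]
        refine Fintype.sum_equiv (Equiv.subtypeEquivRight (by simp)) _ _ fun x => ?_
        have hx : t (x : ι) ≠ 0 := by
          have := x.2
          simp only [Finset.mem_filter] at this
          exact this.2
        have : r0 (x : ι) = g ⟨(x : ι), hx⟩ := by simp only [hr0]; rw [dif_pos hx]
        rw [this]
        rfl
      have hr0supp : ∀ j, r0 j ≠ 0 → t j ≠ 0 := by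
        intro j hj
        by_contra h
        exact hj (by simp [hr0, h])
      have hr0ne : r0 i0 ≠ 0 := by
        have : r0 (i0 : ι) = g i0 := by simp only [hr0]; rw [dif_pos i0.2]
        rw [this]; exact hi0
      obtain ⟨r, hrsum, hrsupp, j1, hj1⟩ :
          ∃ r : ι → ℝ, (∑ j, r j • v j) = 0 ∧ (∀ j, r j ≠ 0 → t j ≠ 0) ∧
            ∃ j, 0 < r j := by
        rcases lt_or_gt_of_ne hr0ne with h | h
        · refine ⟨-r0, by simpa using hr0sum, fun j hj => hr0supp j (by simpa using hj),
            ⟨i0, by simpa using h⟩⟩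
        · exact ⟨r0, hr0sum, hr0supp, ⟨i0, h⟩⟩
      -- minimize t j / r j over positive coordinates of r
      have hPne : (Finset.univ.filter fun j => 0 < r j).Nonempty :=
        ⟨j1, by simp [hj1]⟩
      obtain ⟨j0, hj0mem, hj0min⟩ :=
        Finset.exists_min_image _ (fun j => t j / r j) hPne
      rw [Finset.mem_filter] at hj0mem
      have hrj0 : 0 < r j0 := hj0mem.2
      set α := t j0 / r j0 with hα
      set s : ι → ℝ := fun j => t j - α * r j with hs
      have hsnn : ∀ j, 0 ≤ s j := by
        intro j
        rcases le_or_gt (r j) 0 with h | h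
        · have : 0 ≤ -(α * r j) := by
            apply neg_nonneg.mpr
            apply mul_nonpos_of_nonneg_of_nonpos _ h
            exact div_nonneg (ht j0) hrj0.le
          simp only [hs]; linarith [ht j]
        · have := hj0min j (Finset.mem_filter.mpr ⟨Finset.mem_univ _, h⟩)
          have : α * r j ≤ t j := by
            rw [div_le_div_iff₀ hrj0 h] at this
            calc α * r j = t j0 / r j0 * r j := by rw [hα]
              _ ≤ t j := by
                rw [div_mul_eq_mul_div, div_le_iff₀ hrj0]
                linarith [this]
          simp only [hs]; linarith
      have hssum : ∑ j, s j • v j = ∑ j, t j • v j := by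
        simp only [hs, sub_smul, Finset.sum_sub_distrib, mul_smul]
        rw [← Finset.smul_sum, hrsum, smul_zero, sub_zero]
      have hsupp : (Finset.univ.filter fun j => s j ≠ 0)
          ⊆ (Finset.univ.filter fun j => t j ≠ 0).erase j0 := by
        intro j hj
        rw [Finset.mem_filter] at hj
        rw [Finset.mem_erase, Finset.mem_filter]
        constructor
        · rintro rfl
          apply hj.2
          simp only [hs, hα]
          field_simp
          ring
        · refine ⟨Finset.mem_univ _, ?_⟩
          intro h
          apply hj.2
          have hr : r j = 0 := by
            by_contra hr
            exact hrsupp j hr h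
          simp [hs, h, hr]
      have hcard' : (Finset.univ.filter fun j => s j ≠ 0).card ≤ N := by
        have h1 := Finset.card_le_card hsupp
        have hj0t : j0 ∈ Finset.univ.filter fun j => t j ≠ 0 := by
          simp only [Finset.mem_filter]
          exact ⟨Finset.mem_univ _, hrsupp j0 (ne_of_gt hrj0)⟩
        have h2 := Finset.card_erase_of_mem hj0t
        omega
      obtain ⟨s', h1, h2, h3⟩ := ih s hcard' hsnn
      exact ⟨s', h1, h2.trans hssum, h3⟩

/-- piece of the cone supported on σ -/
def conePiece (v : ι → E) (σ : Finset ι) : Set E :=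
  {x | ∃ t : ι → ℝ, (∀ j, 0 ≤ t j) ∧ (∀ j ∉ σ, t j = 0) ∧ x = ∑ j, t j • v j}

lemma conePiece_isClosed [FiniteDimensional ℝ E] (v : ι → E) (σ : Finset ι)
    (hσ : LinearIndependent ℝ (fun j : {x // x ∈ σ} => v j)) :
    IsClosed (conePiece v σ) := by
  classical
  set L : ({x // x ∈ σ} → ℝ) →ₗ[ℝ] E :=
    { toFun := fun t => ∑ j : {x // x ∈ σ}, t j • v (j : ι)
      map_add' := by
        intro a b
        rw [← Finset.sum_add_distrib]
        exact Finset.sum_congr rfl fun j _ => add_smul _ _ _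
      map_smul' := by
        intro c a
        simp only [RingHom.id_apply]
        rw [Finset.smul_sum]
        exact Finset.sum_congr rfl fun j _ => by
          rw [Pi.smul_apply, smul_smul, smul_eq_mul] } with hL
  have hinj : LinearMap.ker L = ⊥ := by
    rw [LinearMap.ker_eq_bot']
    intro m hm
    have := Fintype.linearIndependent_iff.mp hσ m hm
    funext j
    exact this j
  have hemb := LinearMap.isClosedEmbedding_of_injective hinj
  have horth : IsClosed {t : {x // x ∈ σ} → ℝ | ∀ j, 0 ≤ t j} := by
    have : {t : {x // x ∈ σ} → ℝ | ∀ j, 0 ≤ t j}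
        = ⋂ j, {t | 0 ≤ t j} := by ext t; simp
    rw [this]
    exact isClosed_iInter fun j => isClosed_le continuous_const (continuous_apply j)
  have himg : conePiece v σ = L '' {t | ∀ j, 0 ≤ t j} := by
    ext x
    constructor
    · rintro ⟨t, htn, hts, rfl⟩
      refine ⟨fun j => t j, fun j => htn _, ?_⟩
      simp only [hL, LinearMap.coe_mk, AddHom.coe_mk]
      rw [Finset.sum_coe_sort σ (fun j => t j • v j)]
      exact Finset.sum_subset (Finset.subset_univ σ)
        (fun j _ hj => by rw [hts j hj, zero_smul])
    · rintro ⟨t, htn, rfl⟩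
      refine ⟨fun j => if h : j ∈ σ then t ⟨j, h⟩ else 0,
        fun j => ?_, fun j hj => by simp [hj], ?_⟩
      · by_cases h : j ∈ σ
        · simpa [h] using htn ⟨j, h⟩
        · simp [h]
      · simp only [hL, LinearMap.coe_mk, AddHom.coe_mk]
        refine Eq.symm ?_
        calc ∑ x : ι, (if h : x ∈ σ then t ⟨x, h⟩ else 0) • v x
            = ∑ x ∈ σ, (if h : x ∈ σ then t ⟨x, h⟩ else 0) • v x :=
              (Finset.sum_subset (Finset.subset_univ σ)
                (fun j _ hj => by simp [hj])).symm
          _ = ∑ x : {x // x ∈ σ}, (if h : (x : ι) ∈ σ then t ⟨x, h⟩ else 0) • v (x : ι) :=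
              (Finset.sum_coe_sort σ _).symm
          _ = ∑ j : {x // x ∈ σ}, t j • v (j : ι) := by
              refine Finset.sum_congr rfl fun j _ => ?_
              rw [dif_pos j.2]
  rw [himg]
  exact hemb.isClosedMap _ horth

lemma coneOf_isClosed [FiniteDimensional ℝ E] (v : ι → E) : IsClosed (coneOf v) := by
  classical
  have : coneOf v = ⋃ σ ∈ {σ : Finset ι |
      LinearIndependent ℝ (fun j : {x // x ∈ σ} => v j)}, conePiece v σ := by
    ext x
    simp only [Set.mem_iUnion, Set.mem_setOf_eq]
    constructor
    · rintro ⟨t, ht, rfl⟩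
      obtain ⟨s, hs, hsum, hli⟩ := exists_indep_rep v (Finset.univ.filter fun j => t j ≠ 0).card t le_rfl ht
      refine ⟨Finset.univ.filter fun j => s j ≠ 0, ?_, s, hs,
        fun j hj => by simpa using hj, hsum.symm⟩
      let e : {x // x ∈ Finset.univ.filter fun j => s j ≠ 0} ≃ {j // s j ≠ 0} :=
        Equiv.subtypeEquivRight (by simp)
      refine (linearIndependent_equiv' e ?_).mpr hli
      funext x
      simp [e, Equiv.subtypeEquivRight]
      rfl
    · rintro ⟨σ, hσ, t, ht, hts, rfl⟩
      exact ⟨t, ht, rfl⟩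
  rw [this]
  exact Set.Finite.isClosed_biUnion (Set.toFinite _)
    (fun σ hσ => conePiece_isClosed v σ hσ)

lemma mem_coneOf_self (v : ι → E) (j : ι) : v j ∈ coneOf v := by
  classical
  refine ⟨fun k => if k = j then 1 else 0, fun k => by positivity, ?_⟩
  simp only []
  rw [show (∑ k : ι, (if k = j then (1:ℝ) else 0) • v k)
      = ∑ k : ι, (if k = j then v k else 0) from
    Finset.sum_congr rfl fun k _ => by split <;> simp]
  rw [Finset.sum_ite_eq' Finset.univ j v]
  simp

lemma coneOf_smul_mem (v : ι → E) {z : E} (hz : z ∈ coneOf v) {c : ℝ} (hc : 0 ≤ c) :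
    c • z ∈ coneOf v := by
  obtain ⟨t, ht, rfl⟩ := hz
  refine ⟨fun j => c * t j, fun j => mul_nonneg hc (ht j), ?_⟩
  rw [Finset.smul_sum]
  exact Finset.sum_congr rfl fun j _ => by rw [smul_smul]

lemma farkas [FiniteDimensional ℝ E] (v : ι → E) (q : E) (h : q ∉ coneOf v) :
    ∃ φ : E →L[ℝ] ℝ, (∀ j, φ (v j) ≤ 0) ∧ 0 < φ q := by
  obtain ⟨φ, u, hlt, hq⟩ :=
    geometric_hahn_banach_closed_point (coneOf_convex v) (coneOf_isClosed v) h
  have h0 : (0 : E) ∈ coneOf v := ⟨0, fun j => le_refl 0, by simp⟩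
  have hu : 0 < u := by have := hlt 0 h0; simpa using this
  have hnonpos : ∀ z ∈ coneOf v, φ z ≤ 0 := by
    intro z hz
    by_contra hpos
    push_neg at hpos
    have hc : 0 ≤ u / φ z := le_of_lt (div_pos hu hpos)
    have := hlt _ (coneOf_smul_mem v hz hc)
    rw [ContinuousLinearMap.map_smul, smul_eq_mul, div_mul_cancel₀ _ (ne_of_gt hpos)] at this
    exact lt_irrefl u this
  exact ⟨φ, fun j => hnonpos _ (mem_coneOf_self v j), hu.trans hq⟩

end ConeAux

/-- `τ ∈ T_w`. -/
def memTw {d n : ℕ} (A : Matrix (Fin d) (Fin n) ℤ) (w : Fin n → ℝ)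
    (τ : Finset (Fin n)) : Prop :=
  ∃ c : Fin d → ℝ, (∀ j ∈ τ, (∑ i, c i * (A i j : ℝ)) = w j) ∧
    ∀ j ∉ τ, (∑ i, c i * (A i j : ℝ)) < w j

/-- The cone of nonnegative real combinations of the columns `a_j`, `j ∈ τ`. -/
def posCone {d n : ℕ} (A : Matrix (Fin d) (Fin n) ℤ) (τ : Finset (Fin n)) :
    Set (Fin d → ℝ) :=
  {x | ∃ lam : Fin n → ℝ, (∀ j, 0 ≤ lam j) ∧ x = fun i => ∑ j ∈ τ, lam j * (A i j : ℝ)}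

theorem stmt_2 {d n : ℕ} (A : Matrix (Fin d) (Fin n) ℤ)
    (hrank : (A.map (Int.cast : ℤ → ℝ)).rank = d)
    (w : Fin n → ℝ) (hw : ∀ j, 0 < w j) :
    posCone A Finset.univ = ⋃ τ ∈ {τ : Finset (Fin n) | memTw A w τ}, posCone A τ := by
  classical
  ext x
  simp only [Set.mem_iUnion, Set.mem_setOf_eq]
  constructor
  · rintro ⟨lam0, hlam0, hx⟩
    have hxi : ∀ i, x i = ∑ j, lam0 j * (A i j : ℝ) := fun i => congrFun hx i
    -- the feasible set of the primal LP
    set S : Set (Fin n → ℝ) :=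
      {lam | (∀ j, 0 ≤ lam j) ∧ ∀ i, ∑ j, lam j * (A i j : ℝ) = x i} with hS
    set f : (Fin n → ℝ) → ℝ := fun lam => ∑ j, lam j * w j with hf
    have hfcont : Continuous f :=
      continuous_finset_sum _ fun j _ => (continuous_apply j).mul continuous_const
    have hlam0S : lam0 ∈ S := ⟨hlam0, fun i => (hxi i).symm⟩
    set B : ℝ := f lam0 with hB
    set K : Set (Fin n → ℝ) := S ∩ {lam | f lam ≤ B} with hK
    have hSclosed : IsClosed S := by
      rw [hS, Set.setOf_and]
      apply IsClosed.inter
      · have : {lam : Fin n → ℝ | ∀ j, 0 ≤ lam j} = ⋂ j, {lam | 0 ≤ lam j} := by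
          ext lam; simp
        rw [this]
        exact isClosed_iInter fun j =>
          isClosed_le continuous_const (continuous_apply j)
      · have : {lam : Fin n → ℝ | ∀ i, ∑ j, lam j * (A i j : ℝ) = x i}
            = ⋂ i, {lam | ∑ j, lam j * (A i j : ℝ) = x i} := by
          ext lam; simp
        rw [this]
        exact isClosed_iInter fun i => isClosed_eq
          (continuous_finset_sum _ fun j _ => (continuous_apply j).mul continuous_const)
          continuous_const
    have hKcompact : IsCompact K := by
      apply IsCompact.of_isClosed_subset (isCompact_Icc
        (a := (0 : Fin n → ℝ)) (b := fun j => B / w j))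
      · exact hSclosed.inter (isClosed_le hfcont continuous_const)
      · intro lam ⟨⟨hnn, _⟩, hfB⟩
        constructor
        · intro j; exact hnn j
        · intro j
          have h1 : lam j * w j ≤ f lam := by
            rw [hf]
            exact Finset.single_le_sum
              (f := fun j => lam j * w j)
              (fun k _ => mul_nonneg (hnn k) (hw k).le) (Finset.mem_univ j)
          have : lam j * w j ≤ B := h1.trans hfB
          exact (le_div_iff₀ (hw j)).mpr this
    obtain ⟨lamS, hlamSK, hlamSmin'⟩ :=
      hKcompact.exists_isMinOn ⟨lam0, hlam0S, le_refl B⟩ hfcont.continuousOn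
    have hlamSmin : ∀ lam ∈ K, f lamS ≤ f lam := fun lam hl => hlamSmin' hl
    obtain ⟨⟨hlamSnn, hlamSc⟩, hlamSB⟩ := hlamSK
    set μ : ℝ := f lamS with hμ
    have hmin : ∀ lam ∈ S, μ ≤ f lam := by
      intro lam hlamS'
      rcases le_or_gt (f lam) B with h | h
      · exact hlamSmin lam ⟨hlamS', h⟩
      · exact (hlamSmin lam0 ⟨hlam0S, le_refl B⟩).trans h.le
    -- Farkas setup in (Fin d → ℝ) × ℝ
    set g : (Fin n) ⊕ Bool → (Fin d → ℝ) × ℝ := Sum.elim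
      (fun j => (fun i => (A i j : ℝ), w j))
      (fun b => if b then ((0 : Fin d → ℝ), (1:ℝ)) else (-x, -μ)) with hg
    have hq : (((0 : Fin d → ℝ), (-1:ℝ)) : (Fin d → ℝ) × ℝ) ∉ coneOf g := by
      rintro ⟨t, ht, heq⟩
      rw [Fintype.sum_sum_type, Fintype.sum_bool] at heq
      simp only [hg, Sum.elim_inl, Sum.elim_inr, reduceIte] at heq
      have h2 := congrArg Prod.snd heq
      have h1 := congrArg Prod.fst heq
      simp only [Prod.snd_sum, Prod.fst_sum, Prod.smul_snd, Prod.smul_fst,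
        Prod.fst_add, Prod.snd_add, smul_eq_mul, mul_one, mul_neg,
        smul_zero, smul_neg, Bool.false_eq_true, if_false] at h1 h2
      -- h2 : (-1 : ℝ) = ∑ j, t (Sum.inl j) * w j + (t (Sum.inr true) + -(t (Sum.inr false) * μ))
      rcases eq_or_lt_of_le (ht (Sum.inr false)) with h0 | hpos
      · rw [← h0] at h2
        have hnn : 0 ≤ ∑ j, t (Sum.inl j) * w j :=
          Finset.sum_nonneg fun j _ => mul_nonneg (ht _) (hw j).le
        have := ht (Sum.inr true)
        simp only [zero_mul, neg_zero, add_zero] at h2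
        linarith
      · set u' := t (Sum.inr false) with hu'
        set lam' : Fin n → ℝ := fun j => t (Sum.inl j) / u' with hlam'
        have hfeas : ∀ i, ∑ j, lam' j * (A i j : ℝ) = x i := by
          intro i
          have h1i := congrFun h1 i
          simp only [Bool.false_eq_true, if_false, Finset.sum_apply, Pi.add_apply,
            Pi.smul_apply, Pi.neg_apply, Pi.zero_apply, smul_eq_mul, mul_neg,
            smul_zero, smul_neg] at h1i
          -- h1i : 0 = ∑ j, t (Sum.inl j) * A i j + (t (Sum.inr true) * 0? + -(u' * x i))
          have hsum : ∑ j, t (Sum.inl j) * (A i j : ℝ) = u' * x i := by linarith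
          rw [hlam']
          simp only []
          rw [Finset.sum_congr rfl (fun j _ => div_mul_eq_mul_div
            (t (Sum.inl j)) u' ((A i j : ℝ))), ← Finset.sum_div, hsum,
            mul_div_cancel_left₀ _ (ne_of_gt hpos)]
        have hlam'S : lam' ∈ S := ⟨fun j => div_nonneg (ht _) hpos.le, hfeas⟩
        have hflam' : f lam' = (∑ j, t (Sum.inl j) * w j) / u' := by
          rw [hf]
          simp only [hlam']
          rw [Finset.sum_congr rfl (fun j _ => div_mul_eq_mul_div
            (t (Sum.inl j)) u' (w j)), ← Finset.sum_div]
        have hlt : f lam' < μ := by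
          rw [hflam', div_lt_iff₀ hpos]
          have h3 := ht (Sum.inr true)
          have h4 := mul_comm μ u'
          linarith
        exact absurd (hmin lam' hlam'S) (not_le.mpr hlt)
    -- apply Farkas
    obtain ⟨φ, hφ, hφq⟩ := farkas g _ hq
    have hφinl : ∀ j, φ ((fun i => (A i j : ℝ)), w j) ≤ 0 := by
      intro j
      have := hφ (Sum.inl j)
      simpa [hg] using this
    have hφtrue : φ ((0 : Fin d → ℝ), (1:ℝ)) ≤ 0 := by
      have := hφ (Sum.inr true)
      simpa [hg] using this
    have hφfalse : φ (-x, -μ) ≤ 0 := by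
      have := hφ (Sum.inr false)
      simpa [hg] using this
    set sφ : ℝ := φ ((0 : Fin d → ℝ), (1:ℝ)) with hsφ
    have hsneg : sφ < 0 := by
      have hneg : φ ((0 : Fin d → ℝ), (-1:ℝ)) = -sφ := by
        rw [hsφ, ← map_neg]
        congr 1
        refine Prod.ext ?_ ?_ <;> simp
      rw [hneg] at hφq
      linarith
    have hexp : ∀ (u : Fin d → ℝ) (r : ℝ),
        φ (u, r) = (∑ i, u i * φ ((Pi.single i 1 : Fin d → ℝ), (0:ℝ))) + r * sφ := by
      intro u r
      have hdecomp : ((u, r) : (Fin d → ℝ) × ℝ)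
          = (∑ i, u i • (((Pi.single i 1 : Fin d → ℝ), (0:ℝ)) : (Fin d → ℝ) × ℝ))
            + r • (((0 : Fin d → ℝ), (1:ℝ)) : (Fin d → ℝ) × ℝ) := by
        refine Prod.ext ?_ ?_
        · simp only [Prod.fst_add, Prod.fst_sum, Prod.smul_fst, smul_zero, add_zero]
          have hterm : ∀ i : Fin d,
              u i • (Pi.single i 1 : Fin d → ℝ) = Pi.single i (u i) := by
            intro i
            rw [← Pi.single_smul, smul_eq_mul, mul_one]
          rw [Finset.sum_congr rfl fun i _ => hterm i, Finset.univ_sum_single]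
        · simp [Prod.snd_sum]
      rw [hdecomp, map_add, map_sum]
      simp only [ContinuousLinearMap.map_smul, smul_eq_mul]
      rfl
    set c : Fin d → ℝ := fun i => φ ((Pi.single i 1 : Fin d → ℝ), (0:ℝ)) / (-sφ) with hc
    have hkey : ∀ (u : Fin d → ℝ) (r : ℝ), φ (u, r) ≤ 0 → ∑ i, c i * u i ≤ r := by
      intro u r hur
      rw [hexp u r] at hur
      have h1 : ∑ i, u i * φ ((Pi.single i 1 : Fin d → ℝ), (0:ℝ)) ≤ r * (-sφ) := by
        linarith
      have h2 : ∑ i, c i * u i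
          = (∑ i, u i * φ ((Pi.single i 1 : Fin d → ℝ), (0:ℝ))) / (-sφ) := by
        rw [Finset.sum_div]
        refine Finset.sum_congr rfl fun i _ => ?_
        rw [hc]
        rw [div_mul_eq_mul_div, mul_comm]
      rw [h2, div_le_iff₀ (by linarith : (0:ℝ) < -sφ)]
      exact h1
    have hdf : ∀ j, ∑ i, c i * (A i j : ℝ) ≤ w j := by
      intro j
      have := hkey (fun i => (A i j : ℝ)) (w j) (hφinl j)
      simpa using this
    have hopt : μ ≤ ∑ i, c i * x i := by
      have h1 := hkey (-x) (-μ) hφfalse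
      have he : ∑ i, c i * (-x) i = -∑ i, c i * x i := by
        rw [← Finset.sum_neg_distrib]
        exact Finset.sum_congr rfl fun i _ => by simp
      rw [he] at h1
      linarith
    have hswap : ∑ i, c i * x i = ∑ j, lamS j * ∑ i, c i * (A i j : ℝ) := by
      calc ∑ i, c i * x i = ∑ i, c i * ∑ j, lamS j * (A i j : ℝ) :=
            Finset.sum_congr rfl fun i _ => by rw [hlamSc i]
        _ = ∑ i, ∑ j, lamS j * (c i * (A i j : ℝ)) := by
            refine Finset.sum_congr rfl fun i _ => ?_
            rw [Finset.mul_sum]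
            exact Finset.sum_congr rfl fun j _ => by ring
        _ = ∑ j, ∑ i, lamS j * (c i * (A i j : ℝ)) := Finset.sum_comm
        _ = ∑ j, lamS j * ∑ i, c i * (A i j : ℝ) :=
            Finset.sum_congr rfl fun j _ => (Finset.mul_sum _ _ _).symm
    have hub : ∑ j, lamS j * ∑ i, c i * (A i j : ℝ) ≤ μ := by
      rw [hμ, hf]
      exact Finset.sum_le_sum fun j _ =>
        mul_le_mul_of_nonneg_left (hdf j) (hlamSnn j)
    have hcx : ∑ i, c i * x i = μ := le_antisymm (by rw [hswap]; exact hub) hopt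
    have hcs : ∀ j ∈ Finset.univ, lamS j * (w j - ∑ i, c i * (A i j : ℝ)) = 0 := by
      refine (Finset.sum_eq_zero_iff_of_nonneg fun j _ =>
        mul_nonneg (hlamSnn j) (sub_nonneg.mpr (hdf j))).mp ?_
      have hsplit : ∑ j, lamS j * (w j - ∑ i, c i * (A i j : ℝ))
          = (∑ j, lamS j * w j) - ∑ j, lamS j * ∑ i, c i * (A i j : ℝ) := by
        rw [← Finset.sum_sub_distrib]
        exact Finset.sum_congr rfl fun j _ => by ring
      rw [hsplit, ← hswap, hcx]
      have : μ = ∑ j, lamS j * w j := hμ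
      linarith
    refine ⟨Finset.univ.filter fun j => (∑ i, c i * (A i j : ℝ)) = w j,
      ⟨c, fun j hj => (Finset.mem_filter.mp hj).2, fun j hj =>
        lt_of_le_of_ne (hdf j) fun heq' =>
          hj (Finset.mem_filter.mpr ⟨Finset.mem_univ _, heq'⟩)⟩,
      lamS, hlamSnn, ?_⟩
    funext i
    rw [← hlamSc i]
    refine (Finset.sum_subset (Finset.subset_univ _) fun j _ hj => ?_).symm
    have h := hcs j (Finset.mem_univ j)
    rcases mul_eq_zero.mp h with h' | h'
    · rw [h', zero_mul]
    · exfalso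
      exact hj (Finset.mem_filter.mpr ⟨Finset.mem_univ _, by linarith⟩)

  · rintro ⟨τ, hτ, lam, hlam, hx⟩
    refine ⟨fun j => if j ∈ τ then lam j else 0,
      fun j => by by_cases h : j ∈ τ <;> simp [h, hlam], ?_⟩
    rw [hx]
    funext i
    rw [← Finset.sum_subset (Finset.subset_univ τ)
      (fun j _ hj => by simp [hj])]
    exact Finset.sum_congr rfl fun j hj => by simp [hj]
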